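/- For f ∈ D[0,1] (rcll, left-continuous at 1) the complete graph Γ̄_f := {(z,t) ∈ R^d × [0,1] : z ∈ [[f(t-), f(t)]]} is a compact subset of R^d × [0,1]. -/

import Mathlib

open Set Function Filter Topology

/-- The complete graph `Γ̄_f` of a function on `[0,1]`: pairs `(z,t)` with `t ∈ [0,1]` and
`z ∈ [[f(t-), f(t)]]`, with the convention `f(0-) := f(0)`. -/
noncomputable def completeGraph01 {d : ℕ} (f : ℝ → EuclideanSpace ℝ (Fin d)) :
    Set (EuclideanSpace ℝ (Fin d) × ℝ) :=
  {p | p.2 ∈ Icc (0:ℝ) 1 ∧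
    p.1 ∈ segment ℝ (if p.2 = 0 then f 0 else leftLim f p.2) (f p.2)}


section aux

set_option linter.unusedSectionVars false

variable {E : Type*} [NormedAddCommGroup E] [NormedSpace ℝ E]

lemma dist_le_max_of_mem_segment {a b z c : E} (h : z ∈ segment ℝ a b) :
    dist z c ≤ max (dist a c) (dist b c) := by
  obtain ⟨α, β, hα, hβ, hs, rfl⟩ := h
  have hβ' : β = 1 - α := by linarith
  subst hβ'
  rw [dist_eq_norm]
  have hrw : α • a + (1 - α) • b - c = α • (a - c) + (1 - α) • (b - c) := by
    simp [smul_sub, sub_smul]; abel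
  rw [hrw]
  calc ‖α • (a - c) + (1 - α) • (b - c)‖
      ≤ ‖α • (a - c)‖ + ‖(1 - α) • (b - c)‖ := norm_add_le _ _
    _ = α * ‖a - c‖ + (1 - α) * ‖b - c‖ := by
        rw [norm_smul, norm_smul, Real.norm_of_nonneg hα, Real.norm_of_nonneg hβ]
    _ ≤ α * max ‖a - c‖ ‖b - c‖ + (1 - α) * max ‖a - c‖ ‖b - c‖ := by
        gcongr
        · exact le_max_left _ _
        · exact le_max_right _ _
    _ = max ‖a - c‖ ‖b - c‖ := by ring
    _ = max (dist a c) (dist b c) := by rw [dist_eq_norm, dist_eq_norm]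

lemma isCompact_segment' (x y : E) : IsCompact (segment ℝ x y) := by
  rw [segment_eq_image]
  exact isCompact_Icc.image (by fun_prop)

lemma tendsto_of_mem_segment {a b z : ℕ → E} {L : E}
    (hz : ∀ n, z n ∈ segment ℝ (a n) (b n))
    (ha : Tendsto a atTop (𝓝 L)) (hb : Tendsto b atTop (𝓝 L)) :
    Tendsto z atTop (𝓝 L) := by
  rw [tendsto_iff_dist_tendsto_zero]
  apply squeeze_zero (fun n => dist_nonneg)
    (fun n => dist_le_max_of_mem_segment (hz n))
  have ha' := tendsto_iff_dist_tendsto_zero.mp ha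
  have hb' := tendsto_iff_dist_tendsto_zero.mp hb
  simpa using ha'.max hb'

variable {f : ℝ → E}

lemma tendsto_right_seq (hrc : ∀ t ∈ Ico (0:ℝ) 1, ContinuousWithinAt f (Ici t) t)
    {t : ℝ} (ht : t ∈ Ico (0:ℝ) 1) {s : ℕ → ℝ} (hs : ∀ n, t ≤ s n)
    (hst : Tendsto s atTop (𝓝 t)) :
    Tendsto (fun n => f (s n)) atTop (𝓝 (f t)) :=
  (hrc t ht).tendsto.comp
    (tendsto_nhdsWithin_of_tendsto_nhds_of_eventually_within s hst
      (Eventually.of_forall hs))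

lemma tendsto_left_seq (hll : ∀ t ∈ Ioc (0:ℝ) 1, Tendsto f (𝓝[<] t) (𝓝 (leftLim f t)))
    {t : ℝ} (ht : t ∈ Ioc (0:ℝ) 1) {s : ℕ → ℝ} (hs : ∀ n, s n < t)
    (hst : Tendsto s atTop (𝓝 t)) :
    Tendsto (fun n => f (s n)) atTop (𝓝 (leftLim f t)) :=
  (hll t ht).comp
    (tendsto_nhdsWithin_of_tendsto_nhds_of_eventually_within s hst
      (Eventually.of_forall hs))

lemma tendsto_leftLim_right_seq
    (hrc : ∀ t ∈ Ico (0:ℝ) 1, ContinuousWithinAt f (Ici t) t)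
    (hll : ∀ t ∈ Ioc (0:ℝ) 1, Tendsto f (𝓝[<] t) (𝓝 (leftLim f t)))
    {t : ℝ} (ht : t ∈ Ico (0:ℝ) 1) {s : ℕ → ℝ} (hs : ∀ n, s n ∈ Ioc t 1)
    (hst : Tendsto s atTop (𝓝 t)) :
    Tendsto (fun n => leftLim f (s n)) atTop (𝓝 (f t)) := by
  have hchoice : ∀ n : ℕ, ∃ u : ℝ, u ∈ Ioo (max t (s n - 1/(n+1))) (s n) ∧
      dist (f u) (leftLim f (s n)) < 1/(n+1) := by
    intro n
    have hpos : (0:ℝ) < 1/(n+1) := by positivity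
    have hsn : s n ∈ Ioc (0:ℝ) 1 := ⟨lt_of_le_of_lt ht.1 (hs n).1, (hs n).2⟩
    have h1 : ∀ᶠ u in 𝓝[<] (s n), dist (f u) (leftLim f (s n)) < 1/(n+1) :=
      (Metric.tendsto_nhds.mp (hll (s n) hsn)) _ hpos
    have h2 : Ioo (max t (s n - 1/(n+1))) (s n) ∈ 𝓝[<] (s n) :=
      Ioo_mem_nhdsLT (max_lt (hs n).1 (by linarith))
    exact ((eventually_of_mem h2 (fun u hu => hu)).and h1).exists
  choose u hu1 hu2 using hchoice
  have hut : Tendsto u atTop (𝓝 t) := by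
    have hlow : Tendsto (fun n : ℕ => max t (s n - 1/(n+1))) atTop (𝓝 t) := by
      have h0 : Tendsto (fun n : ℕ => s n - 1/(n+1)) atTop (𝓝 t) := by
        simpa using hst.sub tendsto_one_div_add_atTop_nhds_zero_nat
      have := Tendsto.max (tendsto_const_nhds : Tendsto (fun _ : ℕ => t) atTop (𝓝 t)) h0
      simpa using this
    exact tendsto_of_tendsto_of_tendsto_of_le_of_le hlow hst
      (fun n => (hu1 n).1.le) (fun n => (hu1 n).2.le)
  have hfu : Tendsto (fun n => f (u n)) atTop (𝓝 (f t)) :=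
    tendsto_right_seq hrc ht (fun n => le_trans (le_max_left _ _) (hu1 n).1.le) hut
  rw [tendsto_iff_dist_tendsto_zero]
  apply squeeze_zero (fun n => dist_nonneg)
    (g := fun n => 1/(n+1) + dist (f (u n)) (f t))
  · intro n
    calc dist (leftLim f (s n)) (f t)
        ≤ dist (leftLim f (s n)) (f (u n)) + dist (f (u n)) (f t) := dist_triangle _ _ _
      _ ≤ 1/(n+1) + dist (f (u n)) (f t) := by
          rw [dist_comm]; exact add_le_add_left (hu2 n).le _
  · have := (tendsto_one_div_add_atTop_nhds_zero_nat).add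
      (tendsto_iff_dist_tendsto_zero.mp hfu)
    simpa using this

lemma tendsto_leftLim_left_seq
    (hll : ∀ t ∈ Ioc (0:ℝ) 1, Tendsto f (𝓝[<] t) (𝓝 (leftLim f t)))
    {t : ℝ} (ht : t ∈ Ioc (0:ℝ) 1) {s : ℕ → ℝ} (hs : ∀ n, s n ∈ Ioo 0 t)
    (hst : Tendsto s atTop (𝓝 t)) :
    Tendsto (fun n => leftLim f (s n)) atTop (𝓝 (leftLim f t)) := by
  have hchoice : ∀ n : ℕ, ∃ u : ℝ, u ∈ Ioo (s n - 1/(n+1)) (s n) ∧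
      dist (f u) (leftLim f (s n)) < 1/(n+1) := by
    intro n
    have hpos : (0:ℝ) < 1/(n+1) := by positivity
    have hsn : s n ∈ Ioc (0:ℝ) 1 := ⟨(hs n).1, ((hs n).2.le.trans ht.2)⟩
    have h1 : ∀ᶠ u in 𝓝[<] (s n), dist (f u) (leftLim f (s n)) < 1/(n+1) :=
      (Metric.tendsto_nhds.mp (hll (s n) hsn)) _ hpos
    have h2 : Ioo (s n - 1/(n+1)) (s n) ∈ 𝓝[<] (s n) :=
      Ioo_mem_nhdsLT (by linarith)
    exact ((eventually_of_mem h2 (fun u hu => hu)).and h1).exists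
  choose u hu1 hu2 using hchoice
  have hut : Tendsto u atTop (𝓝 t) := by
    have hlow : Tendsto (fun n : ℕ => s n - 1/(n+1)) atTop (𝓝 t) := by
      have : Tendsto (fun n : ℕ => s n - 1/(n+1)) atTop (𝓝 (t - 0)) :=
        hst.sub tendsto_one_div_add_atTop_nhds_zero_nat
      simpa using this
    exact tendsto_of_tendsto_of_tendsto_of_le_of_le hlow hst
      (fun n => (hu1 n).1.le) (fun n => (hu1 n).2.le)
  have hfu : Tendsto (fun n => f (u n)) atTop (𝓝 (leftLim f t)) :=
    tendsto_left_seq hll ht (fun n => (hu1 n).2.trans (hs n).2) hut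
  rw [tendsto_iff_dist_tendsto_zero]
  apply squeeze_zero (fun n => dist_nonneg)
    (g := fun n => 1/(n+1) + dist (f (u n)) (leftLim f t))
  · intro n
    calc dist (leftLim f (s n)) (leftLim f t)
        ≤ dist (leftLim f (s n)) (f (u n)) + dist (f (u n)) (leftLim f t) :=
          dist_triangle _ _ _
      _ ≤ 1/(n+1) + dist (f (u n)) (leftLim f t) := by
          rw [dist_comm]; exact add_le_add_left (hu2 n).le _
  · have := (tendsto_one_div_add_atTop_nhds_zero_nat).add
      (tendsto_iff_dist_tendsto_zero.mp hfu)
    simpa using this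

end aux


theorem aux_isCompact_completeGraph {d : ℕ} (f : ℝ → EuclideanSpace ℝ (Fin d))
    (hrc : ∀ t ∈ Ico (0:ℝ) 1, ContinuousWithinAt f (Ici t) t)
    (hll : ∀ t ∈ Ioc (0:ℝ) 1, Tendsto f (𝓝[<] t) (𝓝 (leftLim f t)))
    (hlc1 : leftLim f 1 = f 1) :
    IsCompact {p : EuclideanSpace ℝ (Fin d) × ℝ | p.2 ∈ Icc (0:ℝ) 1 ∧
      p.1 ∈ segment ℝ (if p.2 = 0 then f 0 else leftLim f p.2) (f p.2)} := by
  set g : ℝ → EuclideanSpace ℝ (Fin d) := fun t => if t = 0 then f 0 else leftLim f t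
    with hg
  apply IsSeqCompact.isCompact
  intro p hp
  obtain ⟨T, hT, φ, hφ, hφt⟩ :=
    isCompact_Icc.tendsto_subseq (x := fun n => (p n).2) (fun n => (hp n).1)
  have hmem : ∀ n, (p n).1 ∈ segment ℝ (g (p n).2) (f (p n).2) := fun n => (hp n).2
  by_cases hfq1 : ∃ᶠ n in atTop, (p (φ n)).2 = T
  · obtain ⟨ψ, hψ, hψP⟩ := Filter.extraction_of_frequently_atTop hfq1
    have hzmem : ∀ n, (p (φ (ψ n))).1 ∈ segment ℝ (g T) (f T) := by
      intro n
      have := hmem (φ (ψ n))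
      rwa [hψP n] at this
    obtain ⟨Z, hZ, χ, hχ, hχz⟩ :=
      (isCompact_segment' (g T) (f T)).tendsto_subseq
        (x := fun n => (p (φ (ψ n))).1) hzmem
    refine ⟨(Z, T), ⟨hT, hZ⟩, φ ∘ ψ ∘ χ, (hφ.comp hψ).comp hχ, ?_⟩
    have h2 : Tendsto (fun n => (p (φ (ψ (χ n)))).2) atTop (𝓝 T) := by
      have : ∀ n, (p (φ (ψ (χ n)))).2 = T := fun n => hψP (χ n)
      simp only [this]; exact tendsto_const_nhds
    exact hχz.prodMk_nhds h2
  by_cases hfq2 : ∃ᶠ n in atTop, T < (p (φ n)).2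
  · obtain ⟨ψ, hψ, hψP⟩ := Filter.extraction_of_frequently_atTop hfq2
    set s : ℕ → ℝ := fun n => (p (φ (ψ n))).2 with hs
    have hst : Tendsto s atTop (𝓝 T) := hφt.comp hψ.tendsto_atTop
    have hsIoc : ∀ n, s n ∈ Ioc T 1 := fun n => ⟨hψP n, (hp (φ (ψ n))).1.2⟩
    have hT1 : T < 1 := lt_of_lt_of_le (hsIoc 0).1 (hsIoc 0).2
    have hT' : T ∈ Ico (0:ℝ) 1 := ⟨hT.1, hT1⟩
    have ha : Tendsto (fun n => g (s n)) atTop (𝓝 (f T)) := by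
      have h0 : ∀ n, g (s n) = leftLim f (s n) := fun n =>
        if_neg (ne_of_gt (lt_of_le_of_lt hT.1 (hsIoc n).1))
      simp only [h0]
      exact tendsto_leftLim_right_seq hrc hll hT' hsIoc hst
    have hb : Tendsto (fun n => f (s n)) atTop (𝓝 (f T)) :=
      tendsto_right_seq hrc hT' (fun n => (hsIoc n).1.le) hst
    have hz : Tendsto (fun n => (p (φ (ψ n))).1) atTop (𝓝 (f T)) :=
      tendsto_of_mem_segment (fun n => hmem (φ (ψ n))) ha hb
    exact ⟨(f T, T), ⟨hT, right_mem_segment _ _ _⟩, φ ∘ ψ, hφ.comp hψ,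
      hz.prodMk_nhds hst⟩
  · have hfq3 : ∃ᶠ n in atTop, (p (φ n)).2 < T := by
      have h1 := not_frequently.mp hfq1
      have h2 := not_frequently.mp hfq2
      exact ((h1.and h2).mono fun n hn =>
        lt_of_le_of_ne (not_lt.mp hn.2) hn.1).frequently
    have hTpos : 0 < T := by
      obtain ⟨n0, hn0⟩ := hfq3.exists
      exact lt_of_le_of_lt (hp (φ n0)).1.1 hn0
    have hev : ∀ᶠ n in atTop, 0 < (p (φ n)).2 :=
      hφt.eventually (eventually_gt_nhds hTpos)
    obtain ⟨ψ, hψ, hψP⟩ :=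
      Filter.extraction_of_frequently_atTop (hfq3.and_eventually hev)
    set s : ℕ → ℝ := fun n => (p (φ (ψ n))).2 with hs
    have hst : Tendsto s atTop (𝓝 T) := hφt.comp hψ.tendsto_atTop
    have hsIoo : ∀ n, s n ∈ Ioo 0 T := fun n => ⟨(hψP n).2, (hψP n).1⟩
    have hT' : T ∈ Ioc (0:ℝ) 1 := ⟨hTpos, hT.2⟩
    have ha : Tendsto (fun n => g (s n)) atTop (𝓝 (leftLim f T)) := by
      have h0 : ∀ n, g (s n) = leftLim f (s n) := fun n => if_neg (ne_of_gt (hsIoo n).1)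
      simp only [h0]
      exact tendsto_leftLim_left_seq hll hT' hsIoo hst
    have hb : Tendsto (fun n => f (s n)) atTop (𝓝 (leftLim f T)) :=
      tendsto_left_seq hll hT' (fun n => (hsIoo n).2) hst
    have hz : Tendsto (fun n => (p (φ (ψ n))).1) atTop (𝓝 (leftLim f T)) :=
      tendsto_of_mem_segment (fun n => hmem (φ (ψ n))) ha hb
    refine ⟨(leftLim f T, T), ⟨hT, ?_⟩, φ ∘ ψ, hφ.comp hψ, hz.prodMk_nhds hst⟩
    rw [if_neg (ne_of_gt hTpos)]
    exact left_mem_segment _ _ _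

/-- for `f ∈ D[0,1]` (right continuous with left limits on `[0,1]`,
left-continuous at `1`), the complete graph `Γ̄_f` is a compact subset of `ℝ^d × [0,1]`. -/
theorem isCompact_completeGraph {d : ℕ} (f : ℝ → EuclideanSpace ℝ (Fin d))
    (hrc : ∀ t ∈ Ico (0:ℝ) 1, ContinuousWithinAt f (Ici t) t)
    (hll : ∀ t ∈ Ioc (0:ℝ) 1, Tendsto f (𝓝[<] t) (𝓝 (leftLim f t)))
    (hlc1 : leftLim f 1 = f 1) :
    IsCompact (completeGraph01 f) :=
  aux_isCompact_completeGraph f hrc hll hlc1
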